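/- arXiv:math/0605066 — 4 statements merged into one kernel-verified Lean document; each statement's English description precedes it below -/
import Mathlib

section
/- Let U ⊆ ℂ² be an open connected set containing 0, let ω = (A,B) be a holomorphic 1-form on U and X = (P,Q) a holomorphic vector field on U such that (L_X ω) ∧ ω = 0 identically on U and the function i_X ω = A·P + B·Q is nonvanishing on U. Then the holomorphic 1-form η := (A/(i_X ω), B/(i_X ω)) is closed (i.e. ∂(A/(i_X ω))/∂y = ∂(B/(i_X ω))/∂x on U) and satisfies L_X η = 0 on U. -/
open Complex Filter Topology

noncomputable section

/-- A point of the complex plane `ℂ²`. -/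
abbrev Pt : Type := ℂ × ℂ

/-- A (holomorphic) 1-form `A dx + B dy` on (an open subset of) `ℂ²`,
identified with the pair of functions `(A, B)`. -/
abbrev Form1 : Type := (Pt → ℂ) × (Pt → ℂ)

/-- The complex partial derivative `∂f/∂x`. -/
noncomputable def pdx (f : Pt → ℂ) (p : Pt) : ℂ := fderiv ℂ f p (1, 0)

/-- The complex partial derivative `∂f/∂y`. -/
noncomputable def pdy (f : Pt → ℂ) (p : Pt) : ℂ := fderiv ℂ f p (0, 1)

/-- The derivative `X(f) = P ∂f/∂x + Q ∂f/∂y` of `f` along the vector field `X = (P, Q)`. -/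
noncomputable def Xf (P Q f : Pt → ℂ) (p : Pt) : ℂ := P p * pdx f p + Q p * pdy f p

/-- The contraction `i_X ω = A·P + B·Q` of the 1-form `ω = (A,B)` with `X = (P,Q)`. -/
noncomputable def contr (P Q : Pt → ℂ) (ω : Form1) (p : Pt) : ℂ := ω.1 p * P p + ω.2 p * Q p

/-- The wedge `ω ∧ ω' = A·B' − B·A'` of two 1-forms, as a function. -/
noncomputable def wedge (ω ω' : Form1) (p : Pt) : ℂ := ω.1 p * ω'.2 p - ω.2 p * ω'.1 p

/-- The differential `df = (∂f/∂x, ∂f/∂y)` of a function. -/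
noncomputable def fd (f : Pt → ℂ) : Form1 := (pdx f, pdy f)

/-- A 1-form `(A,B)` is closed on `U` if `∂A/∂y = ∂B/∂x` on `U`. -/
def IsClosedOn (ω : Form1) (U : Set Pt) : Prop := ∀ p ∈ U, pdy ω.1 p = pdx ω.2 p

/-- The Lie derivative `L_X ω` of the 1-form `ω = (A,B)` with respect to `X = (P,Q)`:
`L_X ω = (X(A) + A ∂P/∂x + B ∂Q/∂x, X(B) + A ∂P/∂y + B ∂Q/∂y)`. -/
noncomputable def lie (P Q : Pt → ℂ) (ω : Form1) : Form1 :=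
  (fun p => Xf P Q ω.1 p + ω.1 p * pdx P p + ω.2 p * pdx Q p,
   fun p => Xf P Q ω.2 p + ω.1 p * pdy P p + ω.2 p * pdy Q p)

/-- A 1-form is holomorphic on `U` if both its components are. -/
def AnalyticForm (ω : Form1) (U : Set Pt) : Prop :=
  AnalyticOnNhd ℂ ω.1 U ∧ AnalyticOnNhd ℂ ω.2 U

set_option maxHeartbeats 1000000 in
/-- If `ω = (A,B)` is a holomorphic 1-form and `X = (P,Q)` a holomorphic
vector field on an open connected `U ∋ 0` with `(L_X ω) ∧ ω = 0` and `i_X ω` nonvanishing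
on `U`, then `η = ω / (i_X ω)` is closed and satisfies `L_X η = 0` on `U`. -/
theorem stmt_0 (U : Set Pt) (hUopen : IsOpen U) (hUconn : IsConnected U)
    (h0U : (0 : Pt) ∈ U) (A B P Q : Pt → ℂ)
    (hA : AnalyticOnNhd ℂ A U) (hB : AnalyticOnNhd ℂ B U)
    (hP : AnalyticOnNhd ℂ P U) (hQ : AnalyticOnNhd ℂ Q U)
    (hinf : ∀ p ∈ U, wedge (lie P Q (A, B)) (A, B) p = 0)
    (hnv : ∀ p ∈ U, contr P Q (A, B) p ≠ 0)
    (η : Form1)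
    (hη : η = (fun p => A p / contr P Q (A, B) p, fun p => B p / contr P Q (A, B) p)) :
    IsClosedOn η U ∧ ∀ p ∈ U, (lie P Q η).1 p = 0 ∧ (lie P Q η).2 p = 0 := by
  subst hη
  have key : ∀ p ∈ U,
      pdy (fun q => A q / contr P Q (A, B) q) p
        = pdx (fun q => B q / contr P Q (A, B) q) p ∧
      (lie P Q (fun p => A p / contr P Q (A, B) p,
                fun p => B p / contr P Q (A, B) p)).1 p = 0 ∧
      (lie P Q (fun p => A p / contr P Q (A, B) p,
                fun p => B p / contr P Q (A, B) p)).2 p = 0 := by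
    intro p hp
    have hAd := (hA p hp).differentiableAt.hasFDerivAt
    have hBd := (hB p hp).differentiableAt.hasFDerivAt
    have hPd := (hP p hp).differentiableAt.hasFDerivAt
    have hQd := (hQ p hp).differentiableAt.hasFDerivAt
    have hnz : A p * P p + B p * Q p ≠ 0 := by
      have := hnv p hp; simpa [contr] using this
    have hfd : HasFDerivAt (fun q => A q * P q + B q * Q q)
        ((A p • fderiv ℂ P p + P p • fderiv ℂ A p)
          + (B p • fderiv ℂ Q p + Q p • fderiv ℂ B p)) p :=
      (hAd.mul hPd).add (hBd.mul hQd)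
    have hinv : HasFDerivAt (fun q => (A q * P q + B q * Q q)⁻¹)
        ((-((A p * P p + B p * Q p) ^ 2)⁻¹) •
          ((A p • fderiv ℂ P p + P p • fderiv ℂ A p)
            + (B p • fderiv ℂ Q p + Q p • fderiv ℂ B p))) p := by
      simpa [Function.comp_def] using
        (hasDerivAt_inv hnz).comp_hasFDerivAt p hfd
    have h1 : HasFDerivAt (fun q => A q * (A q * P q + B q * Q q)⁻¹) _ p := hAd.mul hinv
    have h2 : HasFDerivAt (fun q => B q * (A q * P q + B q * Q q)⁻¹) _ p := hBd.mul hinv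
    have hw := hinf p hp
    simp only [wedge, lie, Xf, pdx, pdy] at hw
    simp only [contr, lie, Xf, pdx, pdy, div_eq_mul_inv]
    rw [h1.fderiv, h2.fderiv]
    simp only [ContinuousLinearMap.sub_apply, ContinuousLinearMap.add_apply,
      ContinuousLinearMap.smul_apply, ContinuousLinearMap.neg_apply, smul_eq_mul, one_div]
    rw [show ((A p * P p + B p * Q p) ^ 2)⁻¹ = ((A p * P p + B p * Q p)⁻¹) ^ 2 from
      (inv_pow _ 2).symm]
    have hf : (A p * P p + B p * Q p) * (A p * P p + B p * Q p)⁻¹ = 1 :=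
      mul_inv_cancel₀ hnz
    generalize hI : (A p * P p + B p * Q p)⁻¹ = I at *
    refine ⟨?_, ?_, ?_⟩
    · linear_combination I ^ 2 * hw -
        (I * ((fderiv ℂ A p) (0, 1) - (fderiv ℂ B p) (1, 0))) * hf
    · linear_combination I ^ 2 * Q p * hw -
        (I * (P p * (fderiv ℂ A p) (1, 0) + Q p * (fderiv ℂ A p) (0, 1)
          + A p * (fderiv ℂ P p) (1, 0) + B p * (fderiv ℂ Q p) (1, 0))) * hf
    · linear_combination (-(I ^ 2) * P p) * hw -
        (I * (P p * (fderiv ℂ B p) (1, 0) + Q p * (fderiv ℂ B p) (0, 1)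
          + A p * (fderiv ℂ P p) (0, 1) + B p * (fderiv ℂ Q p) (0, 1))) * hf
  exact ⟨fun p hp => (key p hp).1, fun p hp => ⟨(key p hp).2.1, (key p hp).2.2⟩⟩
end
end

section
/- Let U ⊆ ℂ² be a polydisc centered at 0, let ω = (A,B) be a holomorphic 1-form on U and X = (P,Q) a holomorphic vector field on U such that (L_X ω) ∧ ω = 0 identically and i_X ω = A·P + B·Q is nonvanishing on U. Then there exists a holomorphic function u : U → ℂ with u(0) = 0, ∂u/∂x = A/(i_X ω) and ∂u/∂y = B/(i_X ω); consequently X(u) = 1 and du ∧ ω = 0 on U (u is the canonical first integral of ω with respect to X). -/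
open Complex Filter Topology

noncomputable section

open Set MeasureTheory intervalIntegral
open scoped ENNReal NNReal Interval

set_option maxHeartbeats 1000000
set_option synthInstance.maxHeartbeats 200000

/-- `U` is a polydisc centered at the origin. -/
def IsPolydisc (U : Set Pt) : Prop :=
  ∃ r s : ℝ, 0 < r ∧ 0 < s ∧ U = Metric.ball (0 : ℂ) r ×ˢ Metric.ball (0 : ℂ) s

lemma clm_eval (T : Pt →L[ℂ] ℂ) (v : Pt) : T v = v.1 * T (1,0) + v.2 * T (0,1) := by
  have hv : v = v.1 • ((1:ℂ),(0:ℂ)) + v.2 • ((0:ℂ),(1:ℂ)) := by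
    simp [Prod.ext_iff]
  conv_lhs => rw [hv]
  rw [map_add, T.map_smul, T.map_smul, smul_eq_mul, smul_eq_mul]

lemma csmul (t : ℝ) (v : Pt) : (t:ℂ) • v = t • v := by
  simp [Prod.ext_iff, Prod.smul_def, Complex.real_smul]

lemma seg_eq (c z : Pt) (t : ℝ) : c + (t:ℂ) • (z - c) = (1-t) • c + t • z := by
  rw [csmul]
  module

lemma seg_mem {U : Set Pt} (hconv : Convex ℝ U) {c z : Pt} (hc : c ∈ U) (hz : z ∈ U)
    {t : ℝ} (ht : t ∈ Icc (0:ℝ) 1) : c + (t:ℂ) • (z - c) ∈ U := by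
  rw [seg_eq]
  exact hconv hc hz (by linarith [ht.2]) ht.1 (by ring)

lemma clm_aux (T : Pt →L[ℂ] (Pt →L[ℂ] ℂ)) (S : Pt →L[ℂ] ℂ) (t : ℂ) (v : Pt) :
    S.comp (ContinuousLinearMap.id ℂ Pt)
      + (T.comp (t • ContinuousLinearMap.id ℂ Pt)).flip v
    = t • (ContinuousLinearMap.apply ℂ ℂ v).comp T + S := by
  refine ContinuousLinearMap.ext fun w => ?_
  simp only [ContinuousLinearMap.add_apply, ContinuousLinearMap.coe_comp', Function.comp_apply,
    ContinuousLinearMap.coe_id', id_eq, ContinuousLinearMap.flip_apply,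
    ContinuousLinearMap.smul_apply, ContinuousLinearMap.apply_apply, ContinuousLinearMap.map_smul,
    smul_eq_mul]
  ring

lemma clm_aux2 (T : Pt →L[ℂ] (Pt →L[ℂ] ℂ)) (S : Pt →L[ℂ] ℂ) (t : ℂ) (v w : Pt) :
    (t • (ContinuousLinearMap.apply ℂ ℂ v).comp T + S) w = t * (T w v) + S w := by
  simp only [ContinuousLinearMap.add_apply, ContinuousLinearMap.smul_apply,
    ContinuousLinearMap.coe_comp', Function.comp_apply, ContinuousLinearMap.apply_apply,
    smul_eq_mul]

set_option maxHeartbeats 1000000 in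
lemma radial_hasFDerivAt {U : Set Pt} (hU : IsOpen U) {c : Pt}
    (hstar : ∀ z ∈ U, ∀ t : ℝ, t ∈ Icc (0:ℝ) 1 → c + (t:ℂ) • (z - c) ∈ U)
    {L : Pt → Pt →L[ℂ] ℂ} (hL : AnalyticOnNhd ℂ L U)
    (hsym : ∀ x ∈ U, ∀ v w : Pt, fderiv ℂ L x v w = fderiv ℂ L x w v)
    {x : Pt} (hx : x ∈ U) :
    HasFDerivAt (fun z => ∫ t in (0:ℝ)..1, L (c + (t:ℂ) • (z - c)) (z - c)) (L x) x := by
  set DL := fderiv ℂ L with hDLdef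
  have hDL : AnalyticOnNhd ℂ DL U := hL.fderiv_of_isOpen hU
  have hLc : ContinuousOn L U := hL.continuousOn
  have hDLc : ContinuousOn DL U := hDL.continuousOn
  -- choose ε
  obtain ⟨ε, hε, hεU⟩ : ∃ ε > 0, Metric.closedBall x ε ⊆ U := by
    obtain ⟨δ, hδ, hδU⟩ := Metric.isOpen_iff.1 hU x hx
    exact ⟨δ/2, by linarith, (Metric.closedBall_subset_ball (by linarith)).trans hδU⟩
  set γ : Pt → ℝ → Pt := fun z t => c + (t:ℂ) • (z - c) with hγdef
  have hγcont : ∀ z, Continuous (γ z) := by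
    intro z; exact continuous_const.add ((Complex.continuous_ofReal).smul continuous_const)
  have hγmem : ∀ z ∈ Metric.closedBall x ε, ∀ t ∈ Icc (0:ℝ) 1, γ z t ∈ U := by
    intro z hz t ht; exact hstar z (hεU hz) t ht
  -- compact set and bound
  set K : Set Pt := (fun q : ℝ × Pt => γ q.2 q.1) '' (Icc (0:ℝ) 1 ×ˢ Metric.closedBall x ε)
    with hKdef
  have hKcompact : IsCompact K := by
    apply (isCompact_Icc.prod (isCompact_closedBall x ε)).image
    exact continuous_const.add ((Complex.continuous_ofReal.comp continuous_fst).smul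
      (continuous_snd.sub continuous_const))
  have hKU : K ⊆ U := by
    rintro p ⟨⟨t, z⟩, ⟨ht, hz⟩, rfl⟩
    exact hγmem z hz t ht
  obtain ⟨M₁, hM₁⟩ := hKcompact.exists_bound_of_continuousOn (hLc.mono hKU)
  obtain ⟨M₂, hM₂⟩ := hKcompact.exists_bound_of_continuousOn (f := DL) (hDLc.mono hKU)
  set M : ℝ := max (max M₁ M₂) 0 with hMdef
  have hM0 : 0 ≤ M := le_max_right _ _
  have hML : ∀ p ∈ K, ‖L p‖ ≤ M := fun p hp =>
    (hM₁ p hp).trans ((le_max_left _ _).trans (le_max_left _ _))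
  have hMDL : ∀ p ∈ K, ‖DL p‖ ≤ M := fun p hp =>
    (hM₂ p hp).trans ((le_max_right _ _).trans (le_max_left _ _))
  set D : ℝ := ‖x - c‖ + ε with hDdef
  have hD0 : 0 ≤ D := add_nonneg (norm_nonneg _) hε.le
  have hzcD : ∀ z ∈ Metric.closedBall x ε, ‖z - c‖ ≤ D := by
    intro z hz
    calc ‖z - c‖ = ‖(z - x) + (x - c)‖ := by ring_nf
      _ ≤ ‖z - x‖ + ‖x - c‖ := norm_add_le _ _
      _ ≤ ε + ‖x - c‖ := by
          gcongr
          rw [← dist_eq_norm]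
          exact Metric.mem_closedBall.mp hz
      _ = D := by rw [hDdef]; ring
  have hmemK : ∀ z ∈ Metric.closedBall x ε, ∀ t ∈ Icc (0:ℝ) 1, γ z t ∈ K := by
    intro z hz t ht
    exact ⟨(t, z), ⟨ht, hz⟩, rfl⟩
  set F : Pt → ℝ → ℂ := fun z t => L (γ z t) (z - c) with hFdef
  set F' : Pt → ℝ → (Pt →L[ℂ] ℂ) := fun z t =>
    (t:ℂ) • ((ContinuousLinearMap.apply ℂ ℂ (z - c)).comp (DL (γ z t))) + L (γ z t) with hF'def
  have hIoc : Ι (0:ℝ) 1 = Ioc (0:ℝ) 1 := uIoc_of_le zero_le_one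
  have hIcc : uIcc (0:ℝ) 1 = Icc (0:ℝ) 1 := uIcc_of_le zero_le_one
  -- continuity in t
  have hLγ : ∀ z ∈ Metric.closedBall x ε, ContinuousOn (fun t => L (γ z t)) (Icc (0:ℝ) 1) := by
    intro z hz
    exact hLc.comp (hγcont z).continuousOn (fun t ht => hγmem z hz t ht)
  have hDLγ : ∀ z ∈ Metric.closedBall x ε, ContinuousOn (fun t => DL (γ z t)) (Icc (0:ℝ) 1) := by
    intro z hz
    exact hDLc.comp (hγcont z).continuousOn (fun t ht => hγmem z hz t ht)
  have hFcont : ∀ z ∈ Metric.closedBall x ε, ContinuousOn (F z) (Icc (0:ℝ) 1) := by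
    intro z hz
    exact ((ContinuousLinearMap.apply ℂ ℂ (z - c)).continuous).comp_continuousOn (hLγ z hz)
  have hF'cont : ∀ z ∈ Metric.closedBall x ε, ContinuousOn (F' z) (Icc (0:ℝ) 1) := by
    intro z hz
    apply ContinuousOn.add
    · apply ContinuousOn.smul (Complex.continuous_ofReal.continuousOn)
      exact ((ContinuousLinearMap.compL ℂ Pt (Pt →L[ℂ] ℂ) ℂ
        (ContinuousLinearMap.apply ℂ ℂ (z - c))).continuous).comp_continuousOn (hDLγ z hz)
    · exact hLγ z hz
  -- measurability etc
  have hball_cb : Metric.ball x ε ⊆ Metric.closedBall x ε := Metric.ball_subset_closedBall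
  have hF_meas : ∀ᶠ z in 𝓝 x, AEStronglyMeasurable (F z) (volume.restrict (Ι (0:ℝ) 1)) := by
    filter_upwards [Metric.ball_mem_nhds x hε] with z hz
    rw [hIoc]
    exact ((hFcont z (hball_cb hz)).mono Ioc_subset_Icc_self).aestronglyMeasurable
      measurableSet_Ioc
  have hxcb : x ∈ Metric.closedBall x ε := Metric.mem_closedBall_self hε.le
  have hF_int : IntervalIntegrable (F x) volume 0 1 :=
    ((hFcont x hxcb).mono (by rw [hIcc])).intervalIntegrable
  have hF'_meas : AEStronglyMeasurable (F' x) (volume.restrict (Ι (0:ℝ) 1)) := by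
    rw [hIoc]
    exact ((hF'cont x hxcb).mono Ioc_subset_Icc_self).aestronglyMeasurable measurableSet_Ioc
  -- bound
  have h_bound : ∀ᵐ t ∂volume, t ∈ Ι (0:ℝ) 1 → ∀ z ∈ Metric.ball x ε, ‖F' z t‖ ≤ M * D + M := by
    refine Eventually.of_forall fun t ht z hz => ?_
    rw [hIoc] at ht
    have ht' : t ∈ Icc (0:ℝ) 1 := Ioc_subset_Icc_self ht
    have hzK := hmemK z (hball_cb hz) t ht'
    have h1 : ‖(ContinuousLinearMap.apply ℂ ℂ (z - c)).comp (DL (γ z t))‖ ≤ M * D := by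
      apply ContinuousLinearMap.opNorm_le_bound _ (mul_nonneg hM0 hD0)
      intro w
      calc ‖DL (γ z t) w (z - c)‖ ≤ ‖DL (γ z t) w‖ * ‖z - c‖ :=
            ContinuousLinearMap.le_opNorm _ _
        _ ≤ ‖DL (γ z t)‖ * ‖w‖ * ‖z - c‖ := by
            gcongr; exact ContinuousLinearMap.le_opNorm _ _
        _ ≤ M * ‖w‖ * D := by
            gcongr
            · exact hMDL _ hzK
            · exact hzcD z (hball_cb hz)
        _ = M * D * ‖w‖ := by ring
    calc ‖F' z t‖ ≤ ‖(t:ℂ) • ((ContinuousLinearMap.apply ℂ ℂ (z - c)).comp (DL (γ z t)))‖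
          + ‖L (γ z t)‖ := norm_add_le _ _
      _ ≤ 1 * (M * D) + M := by
          gcongr
          · rw [norm_smul]
            apply mul_le_mul _ h1 (norm_nonneg _) zero_le_one
            rw [Complex.norm_real, Real.norm_eq_abs, _root_.abs_of_nonneg ht'.1]
            exact ht'.2
          · exact hML _ hzK
      _ = M * D + M := by ring
  have hbound_int : IntervalIntegrable (fun _ : ℝ => M * D + M) volume 0 1 :=
    intervalIntegrable_const
  -- differentiability in z
  have h_diff : ∀ᵐ t ∂volume, t ∈ Ι (0:ℝ) 1 → ∀ z ∈ Metric.ball x ε,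
      HasFDerivAt (fun z => F z t) (F' z t) z := by
    refine Eventually.of_forall fun t ht z hz => ?_
    rw [hIoc] at ht
    have ht' : t ∈ Icc (0:ℝ) 1 := Ioc_subset_Icc_self ht
    have hmem : γ z t ∈ U := hγmem z (hball_cb hz) t ht'
    have hγd : HasFDerivAt (fun z => γ z t) ((t:ℂ) • ContinuousLinearMap.id ℂ Pt) z := by
      have : HasFDerivAt (fun z : Pt => (t:ℂ) • (z - c))
          ((t:ℂ) • ContinuousLinearMap.id ℂ Pt) z :=
        ((hasFDerivAt_id z).sub_const c).const_smul ((t:ℂ))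
      simpa [hγdef] using this.const_add c
    have hLd : HasFDerivAt L (DL (γ z t)) (γ z t) :=
      ((hL _ hmem).differentiableAt).hasFDerivAt
    have hLγd : HasFDerivAt (fun z => L (γ z t)) ((DL (γ z t)).comp
        ((t:ℂ) • ContinuousLinearMap.id ℂ Pt)) z := hLd.comp z hγd
    have hsubd : HasFDerivAt (fun z : Pt => z - c) (ContinuousLinearMap.id ℂ Pt) z :=
      (hasFDerivAt_id z).sub_const c
    have h2 := hLγd.clm_apply hsubd
    rw [clm_aux (DL (γ z t)) (L (γ z t)) ((t:ℂ)) (z - c)] at h2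
    exact h2
  have hmain := intervalIntegral.hasFDerivAt_integral_of_dominated_of_fderiv_le (Metric.ball_mem_nhds x hε) hF_meas
    hF_int hF'_meas h_bound hbound_int h_diff
  -- identify the derivative
  have hkey : (∫ t in (0:ℝ)..1, F' x t) = L x := by
    refine ContinuousLinearMap.ext fun w => ?_
    have hF'int : IntervalIntegrable (F' x) volume 0 1 :=
      ((hF'cont x hxcb).mono (by rw [hIcc])).intervalIntegrable
    have happ : (∫ t in (0:ℝ)..1, F' x t) w = ∫ t in (0:ℝ)..1, (F' x t) w := by
      rw [intervalIntegral.integral_of_le zero_le_one, intervalIntegral.integral_of_le zero_le_one]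
      rw [ContinuousLinearMap.integral_apply]
      exact hF'int.1
    rw [happ]
    have hFTC : ∀ t ∈ uIcc (0:ℝ) 1,
        HasDerivAt (fun s : ℝ => (s:ℂ) * (L (γ x s) w)) ((F' x t) w) t := by
      intro t ht
      rw [hIcc] at ht
      have hmem : γ x t ∈ U := hγmem x hxcb t ht
      have hγd : HasDerivAt (fun s : ℝ => γ x s) (x - c) t := by
        have h1 : HasDerivAt (fun s : ℝ => (s:ℂ)) 1 t := by
          simpa using (hasDerivAt_id t).ofReal_comp
        have h2 : HasDerivAt (fun s : ℝ => (s:ℂ) • (x - c)) ((1:ℂ) • (x - c)) t :=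
          h1.smul_const (x - c)
        simpa [hγdef] using h2.const_add c
      have hLd : HasFDerivAt L (DL (γ x t)) (γ x t) :=
        ((hL _ hmem).differentiableAt).hasFDerivAt
      have hLγd : HasDerivAt (fun s => L (γ x s)) (DL (γ x t) (x - c)) t := by
        simpa [Function.comp_def] using (hLd.restrictScalars ℝ).comp_hasDerivAt t hγd
      have happd : HasDerivAt (fun s => L (γ x s) w) (DL (γ x t) (x - c) w) t := by
        simpa [Function.comp_def] using
          ((ContinuousLinearMap.apply ℂ ℂ w).hasFDerivAt.restrictScalars ℝ).comp_hasDerivAt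
            t hLγd
      have hsd : HasDerivAt (fun s : ℝ => (s:ℂ)) 1 t := by
        simpa using (hasDerivAt_id t).ofReal_comp
      have hprod := hsd.mul happd
      have hsymuse : DL (γ x t) (x - c) w = DL (γ x t) w (x - c) :=
        hsym _ hmem (x - c) w
      have hval : (F' x t) w = (t:ℂ) * (DL (γ x t) w (x - c)) + L (γ x t) w :=
        clm_aux2 (DL (γ x t)) (L (γ x t)) ((t:ℂ)) (x - c) w
      rw [hval, ← hsymuse]
      convert hprod using 1
      case e'_4 => rfl
      case e'_8 => rfl
      ring
    have hintc : IntervalIntegrable (fun t => (F' x t) w) volume 0 1 := by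
      apply ContinuousOn.intervalIntegrable
      rw [hIcc]
      exact ((ContinuousLinearMap.apply ℂ ℂ w).continuous).comp_continuousOn (hF'cont x hxcb)
    have := intervalIntegral.integral_eq_sub_of_hasDerivAt hFTC hintc
    rw [this]
    have hγ1 : γ x 1 = x := by simp [hγdef]
    have hγ0 : γ x 0 = c := by simp [hγdef]
    simp [hγ1]
  rw [hkey] at hmain
  exact hmain

def primSeries (A : FormalMultilinearSeries ℂ Pt (Pt →L[ℂ] ℂ)) : FormalMultilinearSeries ℂ Pt ℂ :=
  FormalMultilinearSeries.unshift (fun n => ((((n:ℕ)+1 : ℕ) : ℂ))⁻¹ • A n) 0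

lemma primSeries_zero (A : FormalMultilinearSeries ℂ Pt (Pt →L[ℂ] ℂ)) (v : Fin 0 → Pt) :
    primSeries A 0 v = 0 := by
  simp [primSeries, FormalMultilinearSeries.unshift]

lemma primSeries_succ_apply (A : FormalMultilinearSeries ℂ Pt (Pt →L[ℂ] ℂ)) (n : ℕ) (y : Pt) :
    primSeries A (n+1) (fun _ => y) = ((((n:ℕ)+1 : ℕ) : ℂ))⁻¹ • (A n (fun _ => y) y) := by
  simp [primSeries, FormalMultilinearSeries.unshift,
    continuousMultilinearCurryRightEquiv_symm_apply', Fin.init_def]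

lemma primSeries_norm_succ (A : FormalMultilinearSeries ℂ Pt (Pt →L[ℂ] ℂ)) (n : ℕ) :
    ‖primSeries A (n+1)‖ ≤ ‖A n‖ := by
  have h1 : ‖primSeries A (n+1)‖ = ‖((((n:ℕ)+1 : ℕ) : ℂ))⁻¹ • A n‖ := by
    simp only [primSeries, FormalMultilinearSeries.unshift]
    exact (continuousMultilinearCurryRightEquiv' ℂ n Pt ℂ).symm.norm_map _
  rw [h1]
  have hn : (1:ℝ) ≤ ((n:ℕ)+1 : ℕ) := by exact_mod_cast Nat.succ_le_succ (Nat.zero_le n)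
  calc ‖((((n:ℕ)+1 : ℕ) : ℂ))⁻¹ • A n‖ ≤ ‖((((n:ℕ)+1 : ℕ) : ℂ))⁻¹‖ * ‖A n‖ := ContinuousMultilinearMap.opNorm_smul_le _ _
    _ ≤ 1 * ‖A n‖ := by
        gcongr
        rw [norm_inv, Complex.norm_natCast]
        exact inv_le_one_of_one_le₀ hn
    _ = ‖A n‖ := one_mul _

lemma primSeries_norm_zero (A : FormalMultilinearSeries ℂ Pt (Pt →L[ℂ] ℂ)) :
    ‖primSeries A 0‖ = 0 := by
  simp only [primSeries, FormalMultilinearSeries.unshift]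
  simp

lemma primSeries_radius (A : FormalMultilinearSeries ℂ Pt (Pt →L[ℂ] ℂ)) :
    A.radius ≤ (primSeries A).radius := by
  refine ENNReal.le_of_forall_nnreal_lt fun r hr => ?_
  obtain ⟨C, hC0, hC⟩ := A.norm_mul_pow_le_of_lt_radius hr
  refine FormalMultilinearSeries.le_radius_of_bound _ (C * r + C) fun n => ?_
  match n with
  | 0 =>
    rw [primSeries_norm_zero]
    simp only [pow_zero, zero_mul]
    positivity
  | (n+1) =>
    calc ‖primSeries A (n+1)‖ * (r:ℝ) ^ (n+1) ≤ ‖A n‖ * (r:ℝ) ^ (n+1) := by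
          gcongr; exact primSeries_norm_succ A n
      _ = (‖A n‖ * (r:ℝ) ^ n) * r := by ring
      _ ≤ C * r := by gcongr; exact hC n
      _ ≤ C * r + C := by linarith [hC0.le]

lemma radial_hasFPowerSeriesOnBall {L : Pt → Pt →L[ℂ] ℂ}
    {A : FormalMultilinearSeries ℂ Pt (Pt →L[ℂ] ℂ)} {c : Pt} {r : NNReal} (hr : 0 < r)
    (hL : HasFPowerSeriesOnBall L A c r) :
    HasFPowerSeriesOnBall (fun z => ∫ t in (0:ℝ)..1, L (c + (t:ℂ) • (z - c)) (z - c))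
      (primSeries A) c r := by
  refine ⟨le_trans hL.r_le (primSeries_radius A), by exact_mod_cast hr, ?_⟩
  intro y hy
  have hynorm : (‖y‖₊ : ℝ≥0∞) < (r : ℝ≥0∞) := by
    rw [← enorm_eq_nnnorm, ← mem_emetric_ball_zero_iff]
    exact_mod_cast hy
  have hyA : (‖y‖₊ : ℝ≥0∞) < A.radius := lt_of_lt_of_le hynorm hL.r_le
  set K : ℕ → ℂ := fun n => A n (fun _ => y) y with hKdef
  -- pointwise sums
  have step1 : ∀ t ∈ Ioc (0:ℝ) 1, HasSum (fun n => (t:ℂ)^n • K n) (L (c + (t:ℂ) • y) y) := by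
    intro t ht
    have ht0 : (0:ℝ) ≤ t := ht.1.le
    have ht1 : t ≤ 1 := ht.2
    have hyt : (t:ℂ) • y ∈ Metric.eball (0:Pt) r := by
      rw [mem_emetric_ball_zero_iff, enorm_eq_nnnorm]
      have : ‖(t:ℂ) • y‖₊ ≤ ‖y‖₊ := by
        rw [nnnorm_smul]
        have h1 : ‖(t:ℂ)‖₊ ≤ 1 := by
          rw [← NNReal.coe_le_coe]
          simpa [Complex.norm_real, Real.norm_eq_abs, _root_.abs_of_nonneg ht0] using ht1
        calc ‖(t:ℂ)‖₊ * ‖y‖₊ ≤ 1 * ‖y‖₊ := by gcongr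
          _ = ‖y‖₊ := one_mul _
      calc (‖(t:ℂ) • y‖₊ : ℝ≥0∞) ≤ (‖y‖₊ : ℝ≥0∞) := by exact_mod_cast this
        _ < r := hynorm
    have hs := hL.hasSum hyt
    have hs2 := hs.mapL (ContinuousLinearMap.apply ℂ ℂ y)
    convert hs2 using 2 with n
    case e'_3 => rfl
    case e'_6 => rfl
    rw [ContinuousLinearMap.apply_apply]
    have : (fun _ : Fin n => (t:ℂ) • y) = (fun i : Fin n => (fun _ : Fin n => (t:ℂ)) i •
        (fun _ : Fin n => y) i) := rfl
    rw [this, (A n).map_smul_univ]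
    simp [ContinuousLinearMap.smul_apply, smul_eq_mul, hKdef]
  -- integrability, norm bounds
  have hKbound : ∀ n, ‖K n‖ ≤ ‖A n‖ * ‖y‖ ^ n * ‖y‖ := by
    intro n
    calc ‖K n‖ ≤ ‖A n (fun _ => y)‖ * ‖y‖ := ContinuousLinearMap.le_opNorm _ _
      _ ≤ (‖A n‖ * ∏ _i : Fin n, ‖y‖) * ‖y‖ := by
          gcongr
          exact (A n).le_opNorm _
      _ = ‖A n‖ * ‖y‖ ^ n * ‖y‖ := by
          rw [Finset.prod_const, Finset.card_univ, Fintype.card_fin]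
  have hGcont : ∀ n : ℕ, Continuous (fun t : ℝ => (t:ℂ)^n • K n) :=
    fun n => (Complex.continuous_ofReal.pow n).smul continuous_const
  have hGint : ∀ n : ℕ, Integrable (fun t : ℝ => (t:ℂ)^n • K n)
      (volume.restrict (Ioc (0:ℝ) 1)) :=
    fun n => (hGcont n).integrableOn_Ioc
  have hnorm_int : ∀ n : ℕ, (∫ t in Ioc (0:ℝ) 1, ‖(t:ℂ)^n • K n‖) ≤ ‖K n‖ := by
    intro n
    have hle : ∀ t ∈ Ioc (0:ℝ) 1, ‖(t:ℂ)^n • K n‖ ≤ ‖K n‖ := by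
      intro t ht
      rw [norm_smul, norm_pow, Complex.norm_real, Real.norm_eq_abs,
        _root_.abs_of_nonneg ht.1.le]
      calc t^n * ‖K n‖ ≤ 1 * ‖K n‖ := by
            gcongr
            exact pow_le_one₀ ht.1.le ht.2
        _ = ‖K n‖ := one_mul _
    calc (∫ t in Ioc (0:ℝ) 1, ‖(t:ℂ)^n • K n‖) ≤ ∫ _t in Ioc (0:ℝ) 1, ‖K n‖ := by
          apply setIntegral_mono_on (hGint n).norm (integrableOn_const (by simp))
            measurableSet_Ioc hle
      _ = ‖K n‖ := by simp [Real.volume_Ioc]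
  have hsummable : Summable (fun n => ∫ t in Ioc (0:ℝ) 1, ‖(t:ℂ)^n • K n‖) := by
    have hS : Summable (fun n => ‖A n‖ * ‖y‖ ^ n * ‖y‖) := by
      have := (A.summable_norm_mul_pow hyA).mul_right ‖y‖
      simpa [coe_nnnorm] using this
    apply Summable.of_nonneg_of_le (fun n => integral_nonneg (fun t => norm_nonneg _))
      (fun n => (hnorm_int n).trans (hKbound n)) hS
  have hswap := MeasureTheory.hasSum_integral_of_summable_integral_norm hGint hsummable
  have htsum_eq : (∫ t in Ioc (0:ℝ) 1, (∑' n : ℕ, (t:ℂ)^n • K n))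
      = ∫ t in Ioc (0:ℝ) 1, L (c + (t:ℂ) • y) y := by
    apply setIntegral_congr_fun measurableSet_Ioc
    intro t ht
    exact (step1 t ht).tsum_eq
  have hterm : ∀ n : ℕ, (∫ t in Ioc (0:ℝ) 1, (t:ℂ)^n • K n)
      = primSeries A (n+1) (fun _ => y) := by
    intro n
    rw [← intervalIntegral.integral_of_le zero_le_one,
      intervalIntegral.integral_smul_const, primSeries_succ_apply]
    congr 1
    have hcast : (fun t : ℝ => (t:ℂ)^n) = fun t : ℝ => ((t^n : ℝ) : ℂ) := by
      funext t; push_cast; ring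
    rw [hcast, intervalIntegral.integral_ofReal, integral_pow]
    push_cast
    norm_num
  have hfinal : HasSum (fun n => primSeries A (n+1) (fun _ => y))
      (∫ t in (0:ℝ)..1, L (c + (t:ℂ) • y) y) := by
    rw [intervalIntegral.integral_of_le zero_le_one, ← htsum_eq]
    have := hswap
    simp only [hterm] at this
    exact this
  have h0 : primSeries A 0 (fun _ => y) = 0 := primSeries_zero A _
  show HasSum (fun n => primSeries A n (fun _ => y))
    (∫ t in (0:ℝ)..1, L (c + (t:ℂ) • ((c + y) - c)) ((c + y) - c))
  simp only [add_sub_cancel_left]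
  have := (hasSum_nat_add_iff (f := fun n => primSeries A n (fun _ => y)) 1).1 hfinal
  simpa [h0] using this

lemma global_primitive {U : Set Pt} (hU : IsOpen U) (hconv : Convex ℝ U) (h0 : (0:Pt) ∈ U)
    {L : Pt → Pt →L[ℂ] ℂ} (hL : AnalyticOnNhd ℂ L U)
    (hsym : ∀ x ∈ U, ∀ v w : Pt, fderiv ℂ L x v w = fderiv ℂ L x w v) :
    ∃ u : Pt → ℂ, AnalyticOnNhd ℂ u U ∧ u 0 = 0 ∧ ∀ x ∈ U, HasFDerivAt u (L x) x := by
  set u : Pt → ℂ := fun z => ∫ t in (0:ℝ)..1, L ((0:Pt) + (t:ℂ) • (z - 0)) (z - 0) with hu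
  have hstar0 : ∀ z ∈ U, ∀ t : ℝ, t ∈ Icc (0:ℝ) 1 → (0:Pt) + (t:ℂ) • (z - 0) ∈ U :=
    fun z hz t ht => seg_mem hconv h0 hz ht
  have hder : ∀ x ∈ U, HasFDerivAt u (L x) x := fun x hx =>
    radial_hasFDerivAt hU hstar0 hL hsym hx
  refine ⟨u, ?_, ?_, hder⟩
  · intro p hp
    obtain ⟨δ, hδ, hδU⟩ := Metric.isOpen_iff.1 hU p hp
    obtain ⟨Ap, hAp⟩ := hL p hp
    obtain ⟨rp, hrp⟩ := hAp
    obtain ⟨r, hr0, hrlt⟩ : ∃ r : ℝ≥0, 0 < r ∧ (r : ℝ≥0∞) < min rp (ENNReal.ofReal δ) := by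
      have hmin : 0 < min rp (ENNReal.ofReal δ) := lt_min hrp.r_pos (ENNReal.ofReal_pos.2 hδ)
      obtain ⟨r, h1, h2⟩ := ENNReal.lt_iff_exists_nnreal_btwn.1 hmin
      exact ⟨r, by exact_mod_cast h1, h2⟩
    have rpos : (0:ℝ) < r := by exact_mod_cast hr0
    have hrrp : (r : ℝ≥0∞) ≤ rp := (hrlt.trans_le (min_le_left _ _)).le
    have hrδ : (r:ℝ) < δ := by
      have h2 := hrlt.trans_le (min_le_right _ _)
      rw [← ENNReal.ofReal_coe_nnreal, ENNReal.ofReal_lt_ofReal_iff hδ] at h2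
      exact h2
    have hball : Metric.ball p (r:ℝ) ⊆ U := (Metric.ball_subset_ball hrδ.le).trans hδU
    have hps : HasFPowerSeriesOnBall L Ap p r := hrp.mono (by exact_mod_cast hr0) hrrp
    set w : Pt → ℂ := fun z => ∫ t in (0:ℝ)..1, L (p + (t:ℂ) • (z - p)) (z - p) with hw
    have hwps : HasFPowerSeriesOnBall w (primSeries Ap) p r :=
      radial_hasFPowerSeriesOnBall hr0 hps
    have hwan : AnalyticAt ℂ w p := hwps.analyticAt
    have hBopen : IsOpen (Metric.ball p (r:ℝ)) := Metric.isOpen_ball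
    have hBconv : Convex ℝ (Metric.ball p (r:ℝ)) := convex_ball p (r:ℝ)
    have hpB : p ∈ Metric.ball p (r:ℝ) := Metric.mem_ball_self rpos
    have hwd : ∀ x ∈ Metric.ball p (r:ℝ), HasFDerivAt w (L x) x := fun x hx =>
      radial_hasFDerivAt hBopen (fun z hz t ht => seg_mem hBconv hpB hz ht)
        (hL.mono hball) (fun x hx v w' => hsym x (hball hx) v w') hx
    have hconst : ∀ z ∈ Metric.ball p (r:ℝ), u z - w z = u p - w p := by
      intro z hz
      have hdiff : DifferentiableOn ℂ (fun z => u z - w z) (Metric.ball p (r:ℝ)) :=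
        fun x hx => (((hder x (hball hx)).sub (hwd x hx)).differentiableAt).differentiableWithinAt
      refine hBconv.is_const_of_fderivWithin_eq_zero hdiff ?_ hz hpB
      intro x hx
      rw [fderivWithin_of_isOpen hBopen hx, show (fun z => u z - w z) = u - w from rfl, ((hder x (hball hx)).sub (hwd x hx)).fderiv, sub_self]
    have hfan : AnalyticAt ℂ (fun z => w z + (u p - w p)) p := hwan.add analyticAt_const
    apply hfan.congr
    filter_upwards [hBopen.mem_nhds hpB] with z hz
    linear_combination -hconst z hz
  · show (∫ t in (0:ℝ)..1, L ((0:Pt) + (t:ℂ) • ((0:Pt) - 0)) ((0:Pt) - 0)) = 0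
    simp
lemma fderiv_mul_apply {f g : Pt → ℂ} {p : Pt} (hf : DifferentiableAt ℂ f p)
    (hg : DifferentiableAt ℂ g p) (v : Pt) :
    fderiv ℂ (fun q => f q * g q) p v = fderiv ℂ f p v * g p + f p * fderiv ℂ g p v := by
  rw [show (fun q => f q * g q) = f * g from rfl, (hf.hasFDerivAt.mul hg.hasFDerivAt).fderiv]
  simp only [ContinuousLinearMap.add_apply, ContinuousLinearMap.smul_apply, smul_eq_mul]
  ring

/-- On a polydisc `U` centered at `0`, if `ω = (A,B)` is a holomorphic
1-form and `X = (P,Q)` a holomorphic vector field with `(L_X ω) ∧ ω = 0` and `i_X ω`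
nonvanishing on `U`, then there is a holomorphic `u : U → ℂ` with `u(0) = 0` and
`du = ω / (i_X ω)`; consequently `X(u) = 1` and `du ∧ ω = 0` on `U`. -/
theorem stmt_1 (U : Set Pt) (hU : IsPolydisc U) (A B P Q : Pt → ℂ)
    (hA : AnalyticOnNhd ℂ A U) (hB : AnalyticOnNhd ℂ B U)
    (hP : AnalyticOnNhd ℂ P U) (hQ : AnalyticOnNhd ℂ Q U)
    (hinf : ∀ p ∈ U, wedge (lie P Q (A, B)) (A, B) p = 0)
    (hnv : ∀ p ∈ U, contr P Q (A, B) p ≠ 0) :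
    ∃ u : Pt → ℂ, AnalyticOnNhd ℂ u U ∧ u 0 = 0 ∧
      (∀ p ∈ U, pdx u p = A p / contr P Q (A, B) p ∧ pdy u p = B p / contr P Q (A, B) p) ∧
      (∀ p ∈ U, Xf P Q u p = 1 ∧ wedge (fd u) (A, B) p = 0) := by
  obtain ⟨r, s, hr, hs, hUeq⟩ := hU
  have hUopen : IsOpen U := by
    rw [hUeq]; exact (Metric.isOpen_ball).prod Metric.isOpen_ball
  have hUconv : Convex ℝ U := by
    rw [hUeq]; exact (convex_ball (0:ℂ) r).prod (convex_ball (0:ℂ) s)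
  have h0U : (0:Pt) ∈ U := by
    rw [hUeq]; exact ⟨Metric.mem_ball_self hr, Metric.mem_ball_self hs⟩
  set g : Pt → ℂ := fun p => A p * P p + B p * Q p with hgdef
  have hgc : ∀ p, contr P Q (A, B) p = g p := fun p => rfl
  have hg : AnalyticOnNhd ℂ g U := (hA.mul hP).add (hB.mul hQ)
  have hg0 : ∀ p ∈ U, g p ≠ 0 := fun p hp => by rw [← hgc]; exact hnv p hp
  set α : Pt → ℂ := fun p => A p * (g p)⁻¹ with hαdef
  set β : Pt → ℂ := fun p => B p * (g p)⁻¹ with hβdef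
  have hα : AnalyticOnNhd ℂ α U := hA.mul (hg.inv hg0)
  have hβ : AnalyticOnNhd ℂ β U := hB.mul (hg.inv hg0)
  -- closedness of (α, β)
  have hclosed : ∀ p ∈ U, fderiv ℂ α p (0,1) = fderiv ℂ β p (1,0) := by
    intro p hp
    have hAd : DifferentiableAt ℂ A p := (hA p hp).differentiableAt
    have hBd : DifferentiableAt ℂ B p := (hB p hp).differentiableAt
    have hPd : DifferentiableAt ℂ P p := (hP p hp).differentiableAt
    have hQd : DifferentiableAt ℂ Q p := (hQ p hp).differentiableAt
    have hgd : DifferentiableAt ℂ g p := (hg p hp).differentiableAt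
    have hαd : DifferentiableAt ℂ α p := (hα p hp).differentiableAt
    have hβd : DifferentiableAt ℂ β p := (hβ p hp).differentiableAt
    have hαp : α p * g p = A p := inv_mul_cancel_right₀ (hg0 p hp) (A p)
    have hβp : β p * g p = B p := inv_mul_cancel_right₀ (hg0 p hp) (B p)
    have hAloc : (fun q => α q * g q) =ᶠ[𝓝 p] A := by
      filter_upwards [hUopen.mem_nhds hp] with q hq
      exact inv_mul_cancel_right₀ (hg0 q hq) (A q)
    have hBloc : (fun q => β q * g q) =ᶠ[𝓝 p] B := by
      filter_upwards [hUopen.mem_nhds hp] with q hq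
      exact inv_mul_cancel_right₀ (hg0 q hq) (B q)
    have e1 : fderiv ℂ A p (0,1) =
        fderiv ℂ α p (0,1) * g p + α p * fderiv ℂ g p (0,1) := by
      rw [← hAloc.fderiv_eq, fderiv_mul_apply hαd hgd]
    have e2 : fderiv ℂ B p (1,0) =
        fderiv ℂ β p (1,0) * g p + β p * fderiv ℂ g p (1,0) := by
      rw [← hBloc.fderiv_eq, fderiv_mul_apply hβd hgd]
    have e34 : ∀ v : Pt, fderiv ℂ g p v =
        fderiv ℂ A p v * P p + A p * fderiv ℂ P p v
          + (fderiv ℂ B p v * Q p + B p * fderiv ℂ Q p v) := by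
      intro v
      have h1 : HasFDerivAt (fun q => A q * P q + B q * Q q)
          (fderiv ℂ (fun q => A q * P q) p + fderiv ℂ (fun q => B q * Q q) p) p := by
        have hap := (hAd.hasFDerivAt.mul hPd.hasFDerivAt)
        have hbq := (hBd.hasFDerivAt.mul hQd.hasFDerivAt)
        exact hap.fderiv ▸ hbq.fderiv ▸ (hap.add hbq)
      rw [show g = fun q => A q * P q + B q * Q q from rfl, h1.fderiv,
        ContinuousLinearMap.add_apply, fderiv_mul_apply hAd hPd, fderiv_mul_apply hBd hQd]
    rw [e34] at e1 e2
    have hinf' := hinf p hp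
    simp only [wedge, lie, Xf, pdx, pdy] at hinf'
    have hgpv : g p = A p * P p + B p * Q p := rfl
    have hX : fderiv ℂ α p (0,1) =
        (fderiv ℂ A p (0,1) - α p * (fderiv ℂ A p (0,1) * P p + A p * fderiv ℂ P p (0,1)
          + (fderiv ℂ B p (0,1) * Q p + B p * fderiv ℂ Q p (0,1)))) / g p := by
      rw [eq_div_iff (hg0 p hp)]
      linear_combination -e1
    have hY : fderiv ℂ β p (1,0) =
        (fderiv ℂ B p (1,0) - β p * (fderiv ℂ A p (1,0) * P p + A p * fderiv ℂ P p (1,0)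
          + (fderiv ℂ B p (1,0) * Q p + B p * fderiv ℂ Q p (1,0)))) / g p := by
      rw [eq_div_iff (hg0 p hp)]
      linear_combination -e2
    rw [hX, hY, div_eq_div_iff (hg0 p hp) (hg0 p hp)]
    linear_combination (-(fderiv ℂ A p (0,1) * P p + A p * fderiv ℂ P p (0,1)
        + (fderiv ℂ B p (0,1) * Q p + B p * fderiv ℂ Q p (0,1)))) * hαp
      + (fderiv ℂ A p (1,0) * P p + A p * fderiv ℂ P p (1,0)
        + (fderiv ℂ B p (1,0) * Q p + B p * fderiv ℂ Q p (1,0))) * hβp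
      + (fderiv ℂ A p (0,1) - fderiv ℂ B p (1,0)) * hgpv + hinf'
  -- the 1-form as CLM
  set L : Pt → Pt →L[ℂ] ℂ := fun p =>
    α p • ContinuousLinearMap.fst ℂ ℂ ℂ + β p • ContinuousLinearMap.snd ℂ ℂ ℂ with hLdef
  have hLapp : ∀ (p : Pt) (v : Pt), L p v = α p * v.1 + β p * v.2 := by
    intro p v
    simp [hLdef, ContinuousLinearMap.smul_apply, smul_eq_mul]
  have hLan : AnalyticOnNhd ℂ L U := fun p hp =>
    ((hα p hp).smul analyticAt_const).add ((hβ p hp).smul analyticAt_const)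
  have hLder : ∀ p ∈ U, HasFDerivAt L
      ((fderiv ℂ α p).smulRight (ContinuousLinearMap.fst ℂ ℂ ℂ)
        + (fderiv ℂ β p).smulRight (ContinuousLinearMap.snd ℂ ℂ ℂ)) p := by
    intro p hp
    exact ((hα p hp).differentiableAt.hasFDerivAt.smul_const _).add
      ((hβ p hp).differentiableAt.hasFDerivAt.smul_const (ContinuousLinearMap.snd ℂ ℂ ℂ))
  have hsym : ∀ p ∈ U, ∀ v w : Pt, fderiv ℂ L p v w = fderiv ℂ L p w v := by
    intro p hp v w
    rw [(hLder p hp).fderiv]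
    simp only [ContinuousLinearMap.add_apply, ContinuousLinearMap.smulRight_apply,
      ContinuousLinearMap.smul_apply, ContinuousLinearMap.coe_fst',
      ContinuousLinearMap.coe_snd', smul_eq_mul]
    rw [clm_eval (fderiv ℂ α p) v, clm_eval (fderiv ℂ β p) v,
      clm_eval (fderiv ℂ α p) w, clm_eval (fderiv ℂ β p) w]
    linear_combination (v.2 * w.1 - v.1 * w.2) * hclosed p hp
  obtain ⟨u, huan, hu0, hud⟩ := global_primitive hUopen hUconv h0U hLan hsym
  have hpdx : ∀ p ∈ U, pdx u p = α p := by
    intro p hp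
    show fderiv ℂ u p (1,0) = α p
    rw [(hud p hp).fderiv, hLapp]
    simp
  have hpdy : ∀ p ∈ U, pdy u p = β p := by
    intro p hp
    show fderiv ℂ u p (0,1) = β p
    rw [(hud p hp).fderiv, hLapp]
    simp
  refine ⟨u, huan, hu0, ?_, ?_⟩
  · intro p hp
    constructor
    · rw [hpdx p hp, hgc, div_eq_mul_inv]
    · rw [hpdy p hp, hgc, div_eq_mul_inv]
  · intro p hp
    have hgp := hg0 p hp
    constructor
    · show P p * pdx u p + Q p * pdy u p = 1
      rw [hpdx p hp, hpdy p hp]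
      show P p * (A p * (g p)⁻¹) + Q p * (B p * (g p)⁻¹) = 1
      have hc : (A p * P p + B p * Q p) * (g p)⁻¹ = 1 := by
        have hgpv : g p = A p * P p + B p * Q p := rfl
        rw [← hgpv]
        exact mul_inv_cancel₀ hgp
      linear_combination hc
    · show pdx u p * B p - pdy u p * A p = 0
      rw [hpdx p hp, hpdy p hp]
      show (A p * (g p)⁻¹) * B p - (B p * (g p)⁻¹) * A p = 0
      ring
end
end

section
/- Let U ⊆ ℂ² be open containing 0, u : U → ℂ a holomorphic function with du(0) ≠ (0,0), and η a closed holomorphic 1-form on U with η ∧ du = 0 identically. Then there exist a neighborhood V of 0 in ℂ², a neighborhood D of u(0) in ℂ, and a holomorphic function f : D → ℂ such that η = (f∘u)·du on V, i.e. the germ of η at 0 equals the germ of ((f∘u)·∂u/∂x, (f∘u)·∂u/∂y). -/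
open Complex Filter Topology

noncomputable section

lemma fderiv_pt_apply (f : Pt → ℂ) (p w : Pt) :
    fderiv ℂ f p w = w.1 * pdx f p + w.2 * pdy f p := by
  have hw : w = w.1 • ((1:ℂ),(0:ℂ)) + w.2 • ((0:ℂ),(1:ℂ)) := by
    simp [Prod.ext_iff]
  nth_rewrite 1 [hw]
  rw [map_add, map_smul, map_smul]
  simp [pdx, pdy, smul_eq_mul]

lemma pdx_mul {f g : Pt → ℂ} {p : Pt} (hf : DifferentiableAt ℂ f p)
    (hg : DifferentiableAt ℂ g p) :
    pdx (fun q => f q * g q) p = pdx f p * g p + f p * pdx g p := by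
  simp only [pdx, fderiv_fun_mul hf hg, ContinuousLinearMap.add_apply,
    ContinuousLinearMap.smul_apply, smul_eq_mul]
  ring

lemma pdy_mul {f g : Pt → ℂ} {p : Pt} (hf : DifferentiableAt ℂ f p)
    (hg : DifferentiableAt ℂ g p) :
    pdy (fun q => f q * g q) p = pdy f p * g p + f p * pdy g p := by
  simp only [pdy, fderiv_fun_mul hf hg, ContinuousLinearMap.add_apply,
    ContinuousLinearMap.smul_apply, smul_eq_mul]
  ring

lemma mixed_partials {u : Pt → ℂ} {p : Pt} (hu : ∀ᶠ q in 𝓝 p, AnalyticAt ℂ u q) :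
    pdy (pdx u) p = pdx (pdy u) p := by
  have hF : AnalyticAt ℂ (fderiv ℂ u) p := hu.self_of_nhds.fderiv
  have hF' : HasFDerivAt (fderiv ℂ u) (fderiv ℂ (fderiv ℂ u) p) p :=
    hF.differentiableAt.hasFDerivAt
  have hev : ∀ᶠ q in 𝓝 p, HasFDerivAt u (fderiv ℂ u q) q :=
    hu.mono fun q hq => hq.differentiableAt.hasFDerivAt
  have hsymm := second_derivative_symmetric_of_eventually hev hF'
  have key : ∀ v : Pt, fderiv ℂ (fun q => fderiv ℂ u q v) p
      = (ContinuousLinearMap.apply ℂ ℂ v).comp (fderiv ℂ (fderiv ℂ u) p) := fun v =>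
    (((ContinuousLinearMap.apply ℂ ℂ v).hasFDerivAt).comp p hF').fderiv
  have h1 : pdy (pdx u) p = fderiv ℂ (fderiv ℂ u) p (0,1) (1,0) := by
    show fderiv ℂ (fun q => fderiv ℂ u q (1,0)) p (0,1) = _
    rw [key]; rfl
  have h2 : pdx (pdy u) p = fderiv ℂ (fderiv ℂ u) p (1,0) (0,1) := by
    show fderiv ℂ (fun q => fderiv ℂ u q (0,1)) p (1,0) = _
    rw [key]; rfl
  rw [h1, h2, hsymm]

lemma const_y {g : Pt → ℂ} {c : Pt} {r : ℝ}
    (hd : ∀ q ∈ Metric.ball c r, DifferentiableAt ℂ g q)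
    (h0 : ∀ q ∈ Metric.ball c r, pdy g q = 0)
    {w y : ℂ} (h : (w, y) ∈ Metric.ball c r) :
    g (w, y) = g (w, c.2) := by
  have hr : 0 < r := lt_of_le_of_lt dist_nonneg (Metric.mem_ball.1 h)
  have hw : dist w c.1 < r := by
    have h' := Metric.mem_ball.1 h
    rw [Prod.dist_eq] at h'
    exact lt_of_le_of_lt (le_max_left _ _) h'
  have hmem : ∀ t ∈ Metric.ball c.2 r, ((w : ℂ), t) ∈ Metric.ball c r := by
    intro t ht
    rw [Metric.mem_ball, Prod.dist_eq]
    exact max_lt hw ht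
  have hy : y ∈ Metric.ball c.2 r := by
    have h' := Metric.mem_ball.1 h
    rw [Prod.dist_eq] at h'
    exact Metric.mem_ball.2 (lt_of_le_of_lt (le_max_right _ _) h')
  have hc2 : c.2 ∈ Metric.ball c.2 r := Metric.mem_ball_self hr
  have hconv : Convex ℝ (Metric.ball c.2 r) := convex_ball _ _
  have hds : DifferentiableOn ℂ (fun t => g (w, t)) (Metric.ball c.2 r) := by
    intro t ht
    exact ((hd _ (hmem t ht)).comp t
      ((differentiableAt_const w).prodMk differentiableAt_id)).differentiableWithinAt
  have hder : ∀ t ∈ Metric.ball c.2 r,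
      fderivWithin ℂ (fun t => g (w, t)) (Metric.ball c.2 r) t = 0 := by
    intro t ht
    rw [fderivWithin_of_isOpen Metric.isOpen_ball ht]
    have hpair : HasFDerivAt (fun t : ℂ => ((w : ℂ), t))
        ((0 : ℂ →L[ℂ] ℂ).prod (ContinuousLinearMap.id ℂ ℂ)) t :=
      (hasFDerivAt_const w t).prodMk (hasFDerivAt_id t)
    have hco : fderiv ℂ (fun t => g (w, t)) t
        = (fderiv ℂ g (w, t)).comp ((0 : ℂ →L[ℂ] ℂ).prod (ContinuousLinearMap.id ℂ ℂ)) := by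
      have := fderiv_comp (𝕜 := ℂ) t (hd _ (hmem t ht)) hpair.differentiableAt
      rw [show (fun t : ℂ => g (w, t)) = g ∘ (fun t : ℂ => ((w : ℂ), t)) from rfl, this,
        hpair.fderiv]
    apply ContinuousLinearMap.ext_ring
    rw [hco]
    have hz : ((0 : ℂ →L[ℂ] ℂ).prod (ContinuousLinearMap.id ℂ ℂ)) 1 = ((0:ℂ), (1:ℂ)) := rfl
    rw [ContinuousLinearMap.comp_apply, hz]
    have := h0 _ (hmem t ht)
    simp only [pdy] at this
    simp [this]
  exact hconv.is_const_of_fderivWithin_eq_zero hds hder hy hc2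

lemma pd_swap {h : Pt → ℂ} {p : Pt} (hd : DifferentiableAt ℂ h p.swap) :
    pdx (fun q : Pt => h q.swap) p = pdy h p.swap ∧
    pdy (fun q : Pt => h q.swap) p = pdx h p.swap := by
  set σ : Pt →L[ℂ] Pt :=
    (ContinuousLinearMap.snd ℂ ℂ ℂ).prod (ContinuousLinearMap.fst ℂ ℂ ℂ) with hσ
  have hσd : HasFDerivAt (fun q : Pt => q.swap) σ p := σ.hasFDerivAt
  have hco : fderiv ℂ (fun q : Pt => h q.swap) p = (fderiv ℂ h p.swap).comp σ := by
    have := fderiv_comp (𝕜 := ℂ) p hd hσd.differentiableAt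
    rw [show (fun q : Pt => h q.swap) = h ∘ (fun q : Pt => q.swap) from rfl, this, hσd.fderiv]
  constructor
  · show fderiv ℂ (fun q : Pt => h q.swap) p (1,0) = _
    rw [hco]; rfl
  · show fderiv ℂ (fun q : Pt => h q.swap) p (0,1) = _
    rw [hco]; rfl

lemma stmt4_main (U : Set Pt) (hUopen : IsOpen U) (h0U : (0 : Pt) ∈ U) (u : Pt → ℂ)
    (hu : AnalyticOnNhd ℂ u U) (ha0 : pdx u 0 ≠ 0) (η : Form1)
    (hη : AnalyticForm η U) (hclosed : IsClosedOn η U)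
    (hwedge : ∀ p ∈ U, wedge η (fd u) p = 0) :
    ∃ V ∈ 𝓝 (0 : Pt), V ⊆ U ∧ ∃ D ∈ 𝓝 (u 0), ∃ f : ℂ → ℂ, AnalyticOnNhd ℂ f D ∧
      (∀ p ∈ V, u p ∈ D) ∧
      ∀ p ∈ V, η.1 p = f (u p) * pdx u p ∧ η.2 p = f (u p) * pdy u p := by
  obtain ⟨hA, hB⟩ := hη
  have hFa : AnalyticOnNhd ℂ (fderiv ℂ u) U := hu.fderiv_of_isOpen hUopen
  have haU : AnalyticOnNhd ℂ (pdx u) U := fun p hp =>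
    ((ContinuousLinearMap.apply ℂ ℂ (((1:ℂ),(0:ℂ)) : Pt)).analyticAt _).comp (hFa p hp)
  have hbU : AnalyticOnNhd ℂ (pdy u) U := fun p hp =>
    ((ContinuousLinearMap.apply ℂ ℂ (((0:ℂ),(1:ℂ)) : Pt)).analyticAt _).comp (hFa p hp)
  -- the open set W where pdx u ≠ 0
  set W := U ∩ (pdx u) ⁻¹' {(0:ℂ)}ᶜ with hW_def
  have hWsub : W ⊆ U := Set.inter_subset_left
  have hWopen : IsOpen W := by
    have hca : ContinuousOn (pdx u) U := fun p hp => (haU p hp).continuousAt.continuousWithinAt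
    exact hca.isOpen_inter_preimage hUopen isOpen_compl_singleton
  have hWmem : ∀ p, p ∈ W ↔ (p ∈ U ∧ pdx u p ≠ 0) := by
    intro p; simp [hW_def]
  have h0W : (0:Pt) ∈ W := (hWmem 0).2 ⟨h0U, ha0⟩
  -- the quotient function
  set ft := fun p => η.1 p / pdx u p with hft_def
  have hftW : ∀ p ∈ W, AnalyticAt ℂ ft p := fun p hp =>
    (hA p ((hWmem p).1 hp).1).div (haU p ((hWmem p).1 hp).1) ((hWmem p).1 hp).2
  have hAeq : ∀ p ∈ W, η.1 p = ft p * pdx u p := fun p hp =>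
    (div_mul_cancel₀ _ ((hWmem p).1 hp).2).symm
  have hBeq : ∀ p ∈ W, η.2 p = ft p * pdy u p := by
    intro p hp
    obtain ⟨hpU, hpa⟩ := (hWmem p).1 hp
    have hw := hwedge p hpU
    simp only [wedge, fd] at hw
    rw [hft_def]
    rw [div_mul_eq_mul_div, eq_div_iff hpa]
    linear_combination -hw
  -- the key differential relation for ft
  have hrel : ∀ p ∈ W, pdy ft p * pdx u p = pdx ft p * pdy u p := by
    intro p hp
    obtain ⟨hpU, hpa⟩ := (hWmem p).1 hp
    have hWnhds : W ∈ 𝓝 p := hWopen.mem_nhds hp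
    have hfa : DifferentiableAt ℂ ft p := (hftW p hp).differentiableAt
    have hda : DifferentiableAt ℂ (pdx u) p := (haU p hpU).differentiableAt
    have hdb : DifferentiableAt ℂ (pdy u) p := (hbU p hpU).differentiableAt
    have e1 : pdy η.1 p = pdy ft p * pdx u p + ft p * pdy (pdx u) p := by
      have heq : η.1 =ᶠ[𝓝 p] fun q => ft q * pdx u q := by
        filter_upwards [hWnhds] with q hq using hAeq q hq
      have h' : pdy η.1 p = pdy (fun q => ft q * pdx u q) p := by
        simp only [pdy]; rw [heq.fderiv_eq]
      rw [h', pdy_mul hfa hda]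
    have e2 : pdx η.2 p = pdx ft p * pdy u p + ft p * pdx (pdy u) p := by
      have heq : η.2 =ᶠ[𝓝 p] fun q => ft q * pdy u q := by
        filter_upwards [hWnhds] with q hq using hBeq q hq
      have h' : pdx η.2 p = pdx (fun q => ft q * pdy u q) p := by
        simp only [pdx]; rw [heq.fderiv_eq]
      rw [h', pdx_mul hfa hdb]
    have emix : pdy (pdx u) p = pdx (pdy u) p := by
      refine mixed_partials ?_
      filter_upwards [hUopen.mem_nhds hpU] with q hq using hu q hq
    have hcl := hclosed p hpU
    rw [e1, e2, emix] at hcl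
    exact add_right_cancel hcl
  -- the chart Φ
  set Φ := fun p : Pt => (u p, p.2) with hΦ_def
  have hΦ0 : Φ 0 = ((u 0 : ℂ), (0:ℂ)) := rfl
  have hΦa : ∀ p ∈ U, AnalyticAt ℂ Φ p := fun p hp =>
    (hu p hp).prod ((ContinuousLinearMap.snd ℂ ℂ ℂ).analyticAt p)
  -- the invertible linear map
  set M : Pt →L[ℂ] Pt := ((pdx u 0 • ContinuousLinearMap.fst ℂ ℂ ℂ)
      + (pdy u 0 • ContinuousLinearMap.snd ℂ ℂ ℂ)).prod (ContinuousLinearMap.snd ℂ ℂ ℂ) with hM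
  set N : Pt →L[ℂ] Pt := (((pdx u 0)⁻¹ • ContinuousLinearMap.fst ℂ ℂ ℂ)
      - ((pdy u 0 / pdx u 0) • ContinuousLinearMap.snd ℂ ℂ ℂ)).prod
      (ContinuousLinearMap.snd ℂ ℂ ℂ) with hN
  have hMapp : ∀ p : Pt, M p = (pdx u 0 * p.1 + pdy u 0 * p.2, p.2) := fun p => rfl
  have hNapp : ∀ p : Pt, N p = ((pdx u 0)⁻¹ * p.1 - (pdy u 0 / pdx u 0) * p.2, p.2) :=
    fun p => rfl
  have hMN : Function.LeftInverse N M := by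
    intro p
    rw [hMapp, hNapp, Prod.ext_iff]
    refine ⟨?_, rfl⟩
    field_simp
    ring
  have hNM : Function.RightInverse N M := by
    intro p
    rw [hNapp, hMapp, Prod.ext_iff]
    refine ⟨?_, rfl⟩
    field_simp
    ring
  set e := ContinuousLinearEquiv.equivOfInverse M N hMN hNM with he
  have hecoe : (e : Pt →L[ℂ] Pt) = M := rfl
  -- fderiv of Φ
  have hΦderiv : ∀ p ∈ U, HasFDerivAt Φ
      ((fderiv ℂ u p).prod (ContinuousLinearMap.snd ℂ ℂ ℂ)) p := by
    intro p hp
    exact ((hu p hp).differentiableAt.hasFDerivAt).prodMk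
      ((ContinuousLinearMap.snd ℂ ℂ ℂ).hasFDerivAt)
  have hfd_eq : (fderiv ℂ u 0).prod (ContinuousLinearMap.snd ℂ ℂ ℂ) = M := by
    apply ContinuousLinearMap.ext
    intro w
    rw [hMapp]
    simp only [ContinuousLinearMap.prod_apply, ContinuousLinearMap.coe_snd', Prod.mk.injEq]
    refine ⟨?_, trivial⟩
    rw [fderiv_pt_apply]
    ring
  have hΦstrict : HasStrictFDerivAt Φ (e : Pt →L[ℂ] Pt) 0 := by
    have h := (hΦa 0 h0U).hasStrictFDerivAt
    have heq : fderiv ℂ Φ 0 = (e : Pt →L[ℂ] Pt) := by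
      rw [(hΦderiv 0 h0U).fderiv, hfd_eq, hecoe]
    rwa [heq] at h
  set Φhom := hΦstrict.toOpenPartialHomeomorph Φ with hΦhom
  have hcoe : ⇑Φhom = Φ := hΦstrict.toOpenPartialHomeomorph_coe
  have hsrc : (0:Pt) ∈ Φhom.source := hΦstrict.mem_toOpenPartialHomeomorph_source
  set Ψ := Φhom.symm with hΨdef
  have hΨa0 : AnalyticAt ℂ Ψ (Φ 0) := by
    have h := Φhom.analyticAt_symm' (i := e) hsrc
      (by rw [hcoe]; exact hΦa 0 h0U)
      (by rw [hcoe, (hΦderiv 0 h0U).fderiv, hfd_eq, hecoe])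
    rw [hcoe] at h
    exact h
  have hleft : ∀ᶠ p in 𝓝 (0:Pt), Ψ (Φ p) = p := by
    have h := Φhom.eventually_left_inverse hsrc
    rw [hcoe] at h
    exact h
  have hΨ0 : Ψ (Φ 0) = 0 := hleft.self_of_nhds
  have hright : ∀ᶠ q in 𝓝 (Φ 0), Φ (Ψ q) = q := by
    have h1 : Φ 0 ∈ Φhom.target := by
      have h := Φhom.map_source hsrc
      rwa [hcoe] at h
    have h := Φhom.eventually_right_inverse h1
    rw [hcoe] at h
    exact h
  -- the function g on the target
  set g := fun q => ft (Ψ q) with hg_def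
  have hkey : ∀ᶠ q in 𝓝 (Φ 0), (AnalyticAt ℂ g q ∧ pdy g q = 0) := by
    have hWev : ∀ᶠ q in 𝓝 (Φ 0), Ψ q ∈ W := by
      have hc : ContinuousAt Ψ (Φ 0) := hΨa0.continuousAt
      have hWn : W ∈ 𝓝 (Ψ (Φ 0)) := by rw [hΨ0]; exact hWopen.mem_nhds h0W
      exact hc.preimage_mem_nhds hWn
    have hΨev : ∀ᶠ q in 𝓝 (Φ 0), AnalyticAt ℂ Ψ q := hΨa0.eventually_analyticAt
    have hrev : ∀ᶠ q in 𝓝 (Φ 0), ∀ᶠ q' in 𝓝 q, Φ (Ψ q') = q' := hright.eventually_nhds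
    filter_upwards [hWev, hΨev, hrev] with q hqW hqΨ hqr
    obtain ⟨hpU, hpa⟩ := (hWmem (Ψ q)).1 hqW
    have hfta : AnalyticAt ℂ ft (Ψ q) := hftW _ hqW
    have hdΨ : DifferentiableAt ℂ Ψ q := hqΨ.differentiableAt
    refine ⟨hfta.comp hqΨ, ?_⟩
    have hΦP : HasFDerivAt Φ
        ((fderiv ℂ u (Ψ q)).prod (ContinuousLinearMap.snd ℂ ℂ ℂ)) (Ψ q) := hΦderiv _ hpU
    have hid : fderiv ℂ (Φ ∘ Ψ) q = ContinuousLinearMap.id ℂ Pt := by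
      have heq : (Φ ∘ Ψ) =ᶠ[𝓝 q] id := by
        filter_upwards [hqr] with x hx using hx
      rw [heq.fderiv_eq, fderiv_id]
    have hcomp : fderiv ℂ (Φ ∘ Ψ) q
        = ((fderiv ℂ u (Ψ q)).prod (ContinuousLinearMap.snd ℂ ℂ ℂ)).comp (fderiv ℂ Ψ q) := by
      rw [fderiv_comp q hΦP.differentiableAt hdΨ, hΦP.fderiv]
    set w := fderiv ℂ Ψ q (((0:ℂ),(1:ℂ)) : Pt) with hw_def
    have hwid : (fderiv ℂ u (Ψ q) w, w.2) = (((0:ℂ),(1:ℂ)) : Pt) := by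
      have h' : fderiv ℂ (Φ ∘ Ψ) q (((0:ℂ),(1:ℂ)) : Pt) = (((0:ℂ),(1:ℂ)) : Pt) := by
        rw [hid]; rfl
      rw [hcomp] at h'
      simpa using h'
    have hw1 : fderiv ℂ u (Ψ q) w = 0 := congrArg Prod.fst hwid
    have hw2 : w.2 = 1 := congrArg Prod.snd hwid
    have hgq : pdy g q = fderiv ℂ ft (Ψ q) w := by
      show fderiv ℂ (ft ∘ Ψ) q (((0:ℂ),(1:ℂ)) : Pt) = _
      rw [fderiv_comp q hfta.differentiableAt hdΨ]
      rfl
    have h1' : w.1 * pdx u (Ψ q) + pdy u (Ψ q) = 0 := by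
      rw [fderiv_pt_apply, hw2, one_mul] at hw1
      exact hw1
    have hmain : pdx u (Ψ q) * (pdy g q) = 0 := by
      rw [hgq, fderiv_pt_apply, hw2]
      calc pdx u (Ψ q) * (w.1 * pdx ft (Ψ q) + 1 * pdy ft (Ψ q))
          = w.1 * pdx ft (Ψ q) * pdx u (Ψ q) + pdy ft (Ψ q) * pdx u (Ψ q) := by ring
        _ = w.1 * pdx ft (Ψ q) * pdx u (Ψ q) + pdx ft (Ψ q) * pdy u (Ψ q) := by
            rw [hrel _ hqW]
        _ = pdx ft (Ψ q) * (w.1 * pdx u (Ψ q) + pdy u (Ψ q)) := by ring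
        _ = 0 := by rw [h1', mul_zero]
    exact (mul_eq_zero.1 hmain).resolve_left hpa
  obtain ⟨r, hr0, hball⟩ := Metric.eventually_nhds_iff_ball.1 hkey
  have hD : Metric.ball (u 0) r ∈ 𝓝 (u 0) := Metric.ball_mem_nhds _ hr0
  set f := fun z : ℂ => g (z, 0) with hf_def
  have hmemD : ∀ z ∈ Metric.ball (u 0) r, ((z : ℂ), (0:ℂ)) ∈ Metric.ball (Φ 0) r := by
    intro z hz
    rw [hΦ0, Metric.mem_ball, Prod.dist_eq]
    simp only [dist_self]
    exact max_lt (Metric.mem_ball.1 hz) hr0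
  have hfD : AnalyticOnNhd ℂ f (Metric.ball (u 0) r) := by
    intro z hz
    have h1 : AnalyticAt ℂ (fun z : ℂ => ((z : ℂ), (0:ℂ))) z :=
      analyticAt_id.prod analyticAt_const
    have h2 : AnalyticAt ℂ g ((fun z : ℂ => ((z:ℂ), (0:ℂ))) z) := (hball _ (hmemD z hz)).1
    exact AnalyticAt.comp (g := g) (f := fun z : ℂ => ((z:ℂ), (0:ℂ))) (x := z) h2 h1
  -- the neighborhood V
  have hVev : ∀ᶠ p in 𝓝 (0:Pt),
      (p ∈ W ∧ Ψ (Φ p) = p ∧ Φ p ∈ Metric.ball (Φ 0) r) := by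
    have hΦc : ContinuousAt Φ 0 := (hΦa 0 h0U).continuousAt
    have hballn : ∀ᶠ p in 𝓝 (0:Pt), Φ p ∈ Metric.ball (Φ 0) r :=
      hΦc.preimage_mem_nhds (Metric.ball_mem_nhds _ hr0)
    filter_upwards [hWopen.mem_nhds h0W, hleft, hballn] with p h1 h2 h3
    exact ⟨h1, h2, h3⟩
  refine ⟨{p | p ∈ W ∧ Ψ (Φ p) = p ∧ Φ p ∈ Metric.ball (Φ 0) r}, hVev,
    fun p hp => hWsub hp.1, Metric.ball (u 0) r, hD, f, hfD, ?_, ?_⟩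
  · intro p hp
    have h3 := hp.2.2
    rw [Metric.mem_ball, Prod.dist_eq, hΦ0] at h3
    exact Metric.mem_ball.2 (lt_of_le_of_lt (le_max_left _ _) h3)
  · intro p hp
    obtain ⟨hpW, hpfix, hpball⟩ := hp
    have hgΦ : g (Φ p) = ft p := by
      show ft (Ψ (Φ p)) = ft p
      rw [hpfix]
    have hconst : g (Φ p) = f (u p) := by
      show g ((u p : ℂ), p.2) = g (u p, 0)
      have hd' : ∀ q ∈ Metric.ball (Φ 0) r, DifferentiableAt ℂ g q :=
        fun q hq => ((hball q hq).1).differentiableAt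
      have h0' : ∀ q ∈ Metric.ball (Φ 0) r, pdy g q = 0 := fun q hq => (hball q hq).2
      have := const_y hd' h0' (w := u p) (y := p.2) hpball
      rw [this, hΦ0]
    have hftp : f (u p) = ft p := by rw [← hconst, hgΦ]
    exact ⟨by rw [hftp]; exact hAeq p hpW, by rw [hftp]; exact hBeq p hpW⟩


/-- If `u` is holomorphic on an open `U ∋ 0` with `du(0) ≠ (0,0)` and `η`
is a closed holomorphic 1-form on `U` with `η ∧ du = 0`, then near `0` one has
`η = (f∘u)·du` for some holomorphic function `f` defined near `u(0)`. -/
theorem stmt_4 (U : Set Pt) (hUopen : IsOpen U) (h0U : (0 : Pt) ∈ U) (u : Pt → ℂ)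
    (hu : AnalyticOnNhd ℂ u U) (hdu0 : (pdx u 0, pdy u 0) ≠ (0, 0)) (η : Form1)
    (hη : AnalyticForm η U) (hclosed : IsClosedOn η U)
    (hwedge : ∀ p ∈ U, wedge η (fd u) p = 0) :
    ∃ V ∈ 𝓝 (0 : Pt), V ⊆ U ∧ ∃ D ∈ 𝓝 (u 0), ∃ f : ℂ → ℂ, AnalyticOnNhd ℂ f D ∧
      (∀ p ∈ V, u p ∈ D) ∧
      ∀ p ∈ V, η.1 p = f (u p) * pdx u p ∧ η.2 p = f (u p) * pdy u p := by
  have hcases : pdx u 0 ≠ 0 ∨ pdy u 0 ≠ 0 := by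
    by_contra h
    push_neg at h
    exact hdu0 (by rw [h.1, h.2])
  rcases hcases with hx | hy
  · exact stmt4_main U hUopen h0U u hu hx η hη hclosed hwedge
  · -- swap the coordinates
    set U' := (fun p : Pt => p.swap) ⁻¹' U with hU'def
    have hU'open : IsOpen U' := hUopen.preimage continuous_swap
    have h00 : (0:Pt).swap = 0 := rfl
    have h0U' : (0:Pt) ∈ U' := by
      show (0:Pt).swap ∈ U
      rw [h00]; exact h0U
    have hσa : ∀ p : Pt, AnalyticAt ℂ (fun q : Pt => q.swap) p := fun p =>
      ((ContinuousLinearMap.snd ℂ ℂ ℂ).prod (ContinuousLinearMap.fst ℂ ℂ ℂ)).analyticAt p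
    have hswap_mem : ∀ p : Pt, p ∈ U' → p.swap ∈ U := fun p hp => hp
    have hu' : AnalyticOnNhd ℂ (fun q : Pt => u q.swap) U' := fun p hp =>
      AnalyticAt.comp (g := u) (f := fun q : Pt => q.swap) (hu p.swap (hswap_mem p hp)) (hσa p)
    have hdu' : ∀ p ∈ U', DifferentiableAt ℂ u p.swap := fun p hp =>
      (hu p.swap (hswap_mem p hp)).differentiableAt
    have hx' : pdx (fun q : Pt => u q.swap) 0 ≠ 0 := by
      rw [(pd_swap (hdu' 0 h0U')).1, h00]
      exact hy
    obtain ⟨hA, hB⟩ := hη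
    have hA' : AnalyticOnNhd ℂ (fun q : Pt => η.2 q.swap) U' := fun p hp =>
      AnalyticAt.comp (g := η.2) (f := fun q : Pt => q.swap) (hB p.swap (hswap_mem p hp)) (hσa p)
    have hB' : AnalyticOnNhd ℂ (fun q : Pt => η.1 q.swap) U' := fun p hp =>
      AnalyticAt.comp (g := η.1) (f := fun q : Pt => q.swap) (hA p.swap (hswap_mem p hp)) (hσa p)
    have hclosed' : IsClosedOn ((fun q : Pt => η.2 q.swap), (fun q : Pt => η.1 q.swap)) U' := by
      intro p hp
      show pdy (fun q : Pt => η.2 q.swap) p = pdx (fun q : Pt => η.1 q.swap) p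
      rw [(pd_swap ((hB p.swap (hswap_mem p hp)).differentiableAt)).2,
        (pd_swap ((hA p.swap (hswap_mem p hp)).differentiableAt)).1]
      exact (hclosed p.swap (hswap_mem p hp)).symm
    have hwedge' : ∀ p ∈ U',
        wedge ((fun q : Pt => η.2 q.swap), (fun q : Pt => η.1 q.swap))
          (fd (fun q : Pt => u q.swap)) p = 0 := by
      intro p hp
      have hw := hwedge p.swap (hswap_mem p hp)
      simp only [wedge, fd] at hw ⊢
      rw [(pd_swap (hdu' p hp)).1, (pd_swap (hdu' p hp)).2]
      linear_combination -hw
    obtain ⟨V', hV'nhds, hV'U, D, hD, f, hfD, hmemD, hid⟩ :=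
      stmt4_main U' hU'open h0U' (fun q : Pt => u q.swap) hu' hx'
        ((fun q : Pt => η.2 q.swap), (fun q : Pt => η.1 q.swap)) ⟨hA', hB'⟩ hclosed' hwedge'
    refine ⟨(fun p : Pt => p.swap) ⁻¹' V', ?_, ?_, D, hD, f, hfD, ?_, ?_⟩
    · have hc : ContinuousAt (fun p : Pt => p.swap) 0 := continuous_swap.continuousAt
      have : V' ∈ 𝓝 ((0:Pt).swap) := by rw [h00]; exact hV'nhds
      exact hc.preimage_mem_nhds this
    · intro p hp
      have h1 : p.swap ∈ V' := hp
      have h2 : p.swap ∈ U' := hV'U h1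
      exact hswap_mem _ h2
    · intro p hp
      exact hmemD p.swap hp
    · intro p hp
      have h1 : p.swap ∈ V' := hp
      have hpU : p ∈ U := hswap_mem _ (hV'U h1)
      have hdup : DifferentiableAt ℂ u p := (hu p hpU).differentiableAt
      have hid' := hid p.swap h1
      have e1 : pdx (fun q : Pt => u q.swap) p.swap = pdy u p := by
        have := (pd_swap (p := p.swap) (h := u) (by rw [Prod.swap_swap]; exact hdup)).1
        rwa [Prod.swap_swap] at this
      have e2 : pdy (fun q : Pt => u q.swap) p.swap = pdx u p := by
        have := (pd_swap (p := p.swap) (h := u) (by rw [Prod.swap_swap]; exact hdup)).2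
        rwa [Prod.swap_swap] at this
      constructor
      · have := hid'.2
        rw [e2] at this
        exact this
      · have := hid'.1
        rw [e1] at this
        exact this
end
end

section
/- Let U ⊆ ℂ² be a polydisc centered at 0, W = (ω_1,…,ω_k) a k-web on U, X = (P,Q) a transverse infinitesimal automorphism of W with X(0) ≠ (0,0), u_1,…,u_k the canonical first integrals with respect to X, x̃ a first integral of X (x̃(0) = 0, X(x̃) = 0, dx̃(0) ≠ (0,0)), and ω_{k+1} := (−Q,P). Suppose (α_1,…,α_k,β) is an abelian relation of the (k+1)-web W ⊠ F_X = (ω_1,…,ω_k,ω_{k+1}) such that L_X α_i = 0 for all i = 1,…,k. Then there exist constants c_1,…,c_k ∈ ℂ with c_1 + ⋯ + c_k = 0 such that, on a neighborhood of 0, α_i = c_i·du_i for all i (and consequently β = −(c_1·du_1 + ⋯ + c_k·du_k)). -/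
open Complex Filter Topology

noncomputable section

/-- A `k`-web on `U`: a `k`-tuple of holomorphic 1-forms, each nonvanishing on `U`,
pairwise transverse at the origin. -/
structure IsWeb {k : ℕ} (ω : Fin k → Form1) (U : Set Pt) : Prop where
  analytic : ∀ i, AnalyticForm (ω i) U
  nonvanishing : ∀ i, ∀ p ∈ U, ((ω i).1 p, (ω i).2 p) ≠ (0, 0)
  transverse : ∀ i j, i ≠ j → wedge (ω i) (ω j) 0 ≠ 0

/-- An abelian relation `(η_1, …, η_k)` on `V` of the web given by `(ω_1, …, ω_k)`. -/
structure IsAbelianRelOn {k : ℕ} (ω : Fin k → Form1) (η : Fin k → Form1) (V : Set Pt) :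
    Prop where
  analytic : ∀ i, AnalyticForm (η i) V
  closed : ∀ i, IsClosedOn (η i) V
  tangent : ∀ i, ∀ p ∈ V, wedge (η i) (ω i) p = 0
  sum_fst : ∀ p ∈ V, ∑ i, (η i).1 p = 0
  sum_snd : ∀ p ∈ V, ∑ i, (η i).2 p = 0

/-- `X = (P,Q)` is an infinitesimal automorphism of the web `(ω_1, …, ω_k)` on `U`:
`(L_X ω_i) ∧ ω_i = 0` on `U` for all `i`. -/
def IsInfAut (P Q : Pt → ℂ) {k : ℕ} (ω : Fin k → Form1) (U : Set Pt) : Prop :=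
  ∀ i, ∀ p ∈ U, wedge (lie P Q (ω i)) (ω i) p = 0

/-- `X = (P,Q)` is transverse to the web `(ω_1, …, ω_k)` on `U`:
`i_X ω_i` is nonvanishing on `U` for all `i`. -/
def IsTransverseTo (P Q : Pt → ℂ) {k : ℕ} (ω : Fin k → Form1) (U : Set Pt) : Prop :=
  ∀ i, ∀ p ∈ U, contr P Q (ω i) p ≠ 0

/-- `u` is the canonical first integral of the 1-form `ω` with respect to `X = (P,Q)` on `U`:
`u` is holomorphic, `u(0) = 0` and `du = ω / (i_X ω)`. -/
def IsCanonicalFI (P Q : Pt → ℂ) (ω : Form1) (u : Pt → ℂ) (U : Set Pt) : Prop :=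
  AnalyticOnNhd ℂ u U ∧ u 0 = 0 ∧
    ∀ p ∈ U, pdx u p = ω.1 p / contr P Q ω p ∧ pdy u p = ω.2 p / contr P Q ω p


lemma fderiv_apply_decomp (f : Pt → ℂ) (p : Pt) (v : Pt) :
    fderiv ℂ f p v = v.1 * pdx f p + v.2 * pdy f p := by
  have hv : v = v.1 • ((1:ℂ), (0:ℂ)) + v.2 • ((0:ℂ), (1:ℂ)) := by
    simp [Prod.ext_iff]
  calc fderiv ℂ f p v = fderiv ℂ f p (v.1 • ((1:ℂ), (0:ℂ)) + v.2 • ((0:ℂ), (1:ℂ))) := by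
        rw [← hv]
    _ = v.1 * pdx f p + v.2 * pdy f p := by
        rw [map_add, map_smul, map_smul]; rfl

lemma fderiv_zero_of_partials {f : Pt → ℂ} {p : Pt} (h1 : pdx f p = 0) (h2 : pdy f p = 0) :
    fderiv ℂ f p = 0 := by
  refine ContinuousLinearMap.ext fun v => ?_
  rw [fderiv_apply_decomp, h1, h2]; simp

lemma const_of_partials {U : Set Pt} (hO : IsOpen U) (hC : Convex ℝ U) {f : Pt → ℂ}
    (hf : ∀ p ∈ U, DifferentiableAt ℂ f p)
    (h : ∀ p ∈ U, pdx f p = 0 ∧ pdy f p = 0) {p q : Pt} (hp : p ∈ U) (hq : q ∈ U) :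
    f p = f q := by
  apply hC.is_const_of_fderivWithin_eq_zero (fun z hz => (hf z hz).differentiableWithinAt)
    (fun z hz => ?_) hp hq
  rw [fderivWithin_of_isOpen hO hz]
  exact fderiv_zero_of_partials (h z hz).1 (h z hz).2

lemma pdx_add {f g : Pt → ℂ} {p : Pt} (hf : DifferentiableAt ℂ f p)
    (hg : DifferentiableAt ℂ g p) :
    pdx (fun q => f q + g q) p = pdx f p + pdx g p := by
  unfold pdx; rw [fderiv_fun_add hf hg]; simp

lemma pdy_add {f g : Pt → ℂ} {p : Pt} (hf : DifferentiableAt ℂ f p)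
    (hg : DifferentiableAt ℂ g p) :
    pdy (fun q => f q + g q) p = pdy f p + pdy g p := by
  unfold pdy; rw [fderiv_fun_add hf hg]; simp

/-- With `W` a `k`-web on a polydisc `U`, `X = (P,Q)` a transverse
infinitesimal automorphism with `X(0) ≠ (0,0)`, `u_i` the canonical first integrals,
`x̃` a first integral of `X` and `ω_{k+1} = (−Q,P)`: if `(α_1,…,α_k,β)` is an abelian
relation of `W ⊠ F_X` with `L_X α_i = 0` for all `i`, then there are constants `c_i`
summing to `0` with `α_i = c_i·du_i` near `0` (hence `β = −∑ c_i·du_i`). -/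
theorem stmt_8 (k : ℕ) (U : Set Pt) (hU : IsPolydisc U) (ω : Fin k → Form1)
    (hweb : IsWeb ω U) (P Q : Pt → ℂ)
    (hP : AnalyticOnNhd ℂ P U) (hQ : AnalyticOnNhd ℂ Q U)
    (hinf : IsInfAut P Q ω U) (htr : IsTransverseTo P Q ω U)
    (hX0 : (P 0, Q 0) ≠ (0, 0))
    (u : Fin k → Pt → ℂ) (hu : ∀ i, IsCanonicalFI P Q (ω i) (u i) U)
    (xt : Pt → ℂ) (hxt : AnalyticOnNhd ℂ xt U) (hxt0 : xt 0 = 0)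
    (hXxt : ∀ p ∈ U, Xf P Q xt p = 0) (hdxt0 : (pdx xt 0, pdy xt 0) ≠ (0, 0))
    (α : Fin k → Form1) (β : Form1)
    (hab : IsAbelianRelOn (Fin.snoc ω (fun p => -Q p, P)) (Fin.snoc α β) U)
    (hLα : ∀ i, ∀ p ∈ U, (lie P Q (α i)).1 p = 0 ∧ (lie P Q (α i)).2 p = 0) :
    ∃ c : Fin k → ℂ, ∑ i, c i = 0 ∧ ∃ V ∈ 𝓝 (0 : Pt),
      (∀ i, ∀ p ∈ V, (α i).1 p = c i * pdx (u i) p ∧ (α i).2 p = c i * pdy (u i) p) ∧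
      (∀ p ∈ V, β.1 p = -∑ i, c i * pdx (u i) p ∧ β.2 p = -∑ i, c i * pdy (u i) p) := by
  obtain ⟨r, s, hr, hs, hUe⟩ := hU
  have hOpen : IsOpen U := by
    rw [hUe]; exact Metric.isOpen_ball.prod Metric.isOpen_ball
  have hConv : Convex ℝ U := by
    rw [hUe]; exact (convex_ball (0:ℂ) r).prod (convex_ball (0:ℂ) s)
  have h0U : (0:Pt) ∈ U := by
    rw [hUe]; exact ⟨Metric.mem_ball_self hr, Metric.mem_ball_self hs⟩
  have hαan : ∀ i : Fin k, AnalyticForm (α i) U := fun i => by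
    have h := hab.analytic i.castSucc
    rwa [Fin.snoc_castSucc] at h
  have hαcl : ∀ i : Fin k, ∀ p ∈ U, pdy (α i).1 p = pdx (α i).2 p := by
    intro i
    have h := hab.closed i.castSucc
    rwa [Fin.snoc_castSucc] at h
  -- constancy of the contraction i_X α_i
  have hconst : ∀ i : Fin k, ∀ p ∈ U,
      (α i).1 p * P p + (α i).2 p * Q p = (α i).1 0 * P 0 + (α i).2 0 * Q 0 := by
    intro i
    have hdiff : ∀ p ∈ U, DifferentiableAt ℂ
        (fun q => (α i).1 q * P q + (α i).2 q * Q q) p := by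
      intro p hp
      exact (((hαan i).1 p hp).differentiableAt.mul ((hP p hp).differentiableAt)).add
        (((hαan i).2 p hp).differentiableAt.mul ((hQ p hp).differentiableAt))
    intro p hp
    refine const_of_partials hOpen hConv hdiff (fun q hq => ?_) hp h0U
    have hA := ((hαan i).1 q hq).differentiableAt
    have hB := ((hαan i).2 q hq).differentiableAt
    have hPd := (hP q hq).differentiableAt
    have hQd := (hQ q hq).differentiableAt
    have hcl := hαcl i q hq
    have hL1 : P q * pdx (α i).1 q + Q q * pdy (α i).1 q
        + (α i).1 q * pdx P q + (α i).2 q * pdx Q q = 0 := by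
      have h := (hLα i q hq).1
      simp only [lie, Xf] at h
      linear_combination h
    have hL2 : P q * pdx (α i).2 q + Q q * pdy (α i).2 q
        + (α i).1 q * pdy P q + (α i).2 q * pdy Q q = 0 := by
      have h := (hLα i q hq).2
      simp only [lie, Xf] at h
      linear_combination h
    constructor
    · rw [pdx_add (f := fun q => (α i).1 q * P q) (g := fun q => (α i).2 q * Q q) (hA.mul hPd) (hB.mul hQd), pdx_mul hA hPd, pdx_mul hB hQd]
      linear_combination hL1 - Q q * hcl
    · rw [pdy_add (f := fun q => (α i).1 q * P q) (g := fun q => (α i).2 q * Q q) (hA.mul hPd) (hB.mul hQd), pdy_mul hA hPd, pdy_mul hB hQd]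
      linear_combination hL2 + P q * hcl
  -- the pointwise formula α_i = c_i du_i
  have hα : ∀ i : Fin k, ∀ p ∈ U,
      (α i).1 p = ((α i).1 0 * P 0 + (α i).2 0 * Q 0) * pdx (u i) p ∧
      (α i).2 p = ((α i).1 0 * P 0 + (α i).2 0 * Q 0) * pdy (u i) p := by
    intro i p hp
    have hD : (ω i).1 p * P p + (ω i).2 p * Q p ≠ 0 := htr i p hp
    have htan : (α i).1 p * (ω i).2 p - (α i).2 p * (ω i).1 p = 0 := by
      have h := hab.tangent i.castSucc p hp
      simp only [Fin.snoc_castSucc] at h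
      exact h
    have hct := hconst i p hp
    obtain ⟨hux, huy⟩ := (hu i).2.2 p hp
    have hDeq : contr P Q (ω i) p = (ω i).1 p * P p + (ω i).2 p * Q p := rfl
    constructor
    · rw [hux, hDeq, ← mul_div_assoc, eq_div_iff hD]
      linear_combination Q p * htan + (ω i).1 p * hct
    · rw [huy, hDeq, ← mul_div_assoc, eq_div_iff hD]
      linear_combination (-(P p)) * htan + (ω i).2 p * hct
  have hsc : ∀ p ∈ U, (∑ i, (α i).1 p) + β.1 p = 0 ∧ (∑ i, (α i).2 p) + β.2 p = 0 := by
    intro p hp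
    have h1 := hab.sum_fst p hp
    have h2 := hab.sum_snd p hp
    rw [Fin.sum_univ_castSucc] at h1 h2
    simp only [Fin.snoc_castSucc, Fin.snoc_last] at h1 h2
    exact ⟨h1, h2⟩
  refine ⟨fun i => (α i).1 0 * P 0 + (α i).2 0 * Q 0, ?_, U, hOpen.mem_nhds h0U,
    fun i p hp => hα i p hp, fun p hp => ?_⟩
  · have htanβ : β.1 0 * P 0 - β.2 0 * (-Q 0) = 0 := by
      have h := hab.tangent (Fin.last k) 0 h0U
      simp only [Fin.snoc_last] at h
      exact h
    obtain ⟨h1, h2⟩ := hsc 0 h0U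
    have hsplit : ∑ i, ((α i).1 0 * P 0 + (α i).2 0 * Q 0)
        = (∑ i, (α i).1 0) * P 0 + (∑ i, (α i).2 0) * Q 0 := by
      rw [Finset.sum_mul, Finset.sum_mul, ← Finset.sum_add_distrib]
    rw [hsplit]
    linear_combination P 0 * h1 + Q 0 * h2 - htanβ
  · obtain ⟨h1, h2⟩ := hsc p hp
    constructor
    · have hs : ∑ i, (α i).1 p
          = ∑ i, ((α i).1 0 * P 0 + (α i).2 0 * Q 0) * pdx (u i) p :=
        Finset.sum_congr rfl fun i _ => (hα i p hp).1
      linear_combination h1 - hs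
    · have hs : ∑ i, (α i).2 p
          = ∑ i, ((α i).1 0 * P 0 + (α i).2 0 * Q 0) * pdy (u i) p :=
        Finset.sum_congr rfl fun i _ => (hα i p hp).2
      linear_combination h2 - hs
end
end
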